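/- Let σ : ℝ → ℝ be equal on all of ℝ to its Taylor series at 0, σ(u) = ∑_{t≥0} a_t u^t, and set f(u) := ∑_{t≥0} |a_t| u^t. Let B := {x ∈ ℓ² : ∑_{t≥0} |a_t| ‖x‖^{2t} < ∞}. Then there exist maps φ, ψ : B → H into a separable real Hilbert space H (one may take H = ℓ² over the countable index set ⋃_{t≥0} ℕ^t) such that for all x, x' ∈ B and all w ∈ B: ⟨φ(x), φ(x')⟩_H = f(⟨x, x'⟩_{ℓ²}), ⟨ψ(x), ψ(x')⟩_H = f(⟨x, x'⟩_{ℓ²}), and ⟨φ(x), ψ(w)⟩_H = σ(⟨x, w⟩_{ℓ²}). -/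

import Mathlib

open scoped BigOperators ENNReal

/-- The real Hilbert space `ℓ²` of square-summable sequences indexed by `ℕ`. -/
noncomputable abbrev ellTwo : Type := lp (fun _ : ℕ => ℝ) 2

/-- The separable real Hilbert space `ℓ²` over the countable index set `⋃_{t≥0} ℕ^t`
(realized as `Σ t : ℕ, (Fin t → ℕ)`). -/
noncomputable abbrev featSpace : Type := lp (fun _ : (Σ t : ℕ, Fin t → ℕ) => ℝ) 2

private lemma prod_abs_eq (g : ℕ → ℝ) {t : ℕ} (k : Fin t → ℕ) :
    |∏ i, g (k i)| = ∏ i, |g (k i)| := Finset.abs_prod _ _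

private lemma hasSum_pi_prod_abs (g : ℕ → ℝ) (hg : Summable fun n => |g n|) :
    ∀ t : ℕ, HasSum (fun k : Fin t → ℕ => ∏ i, |g (k i)|) ((∑' n, |g n|) ^ t) := by
  intro t
  induction t with
  | zero =>
      simp only [pow_zero, Finset.univ_eq_empty, Finset.prod_empty]
      exact hasSum_single (f := fun _ : Fin 0 → ℕ => (1 : ℝ)) default
        (fun b hb => absurd (Subsingleton.elim b default) hb)
  | succ t ih =>
      have h1 : (0 : ℕ → ℝ) ≤ fun n => |g n| := fun n => abs_nonneg _
      have h2 : (0 : (Fin t → ℕ) → ℝ) ≤ fun k => ∏ i, |g (k i)| :=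
        fun k => Finset.prod_nonneg fun i _ => abs_nonneg _
      have hsum := Summable.mul_of_nonneg (f := fun n => |g n|)
        (g := fun k : Fin t → ℕ => ∏ i, |g (k i)|) hg ih.summable h1 h2
      have hmul := HasSum.mul (f := fun n => |g n|)
        (g := fun k : Fin t → ℕ => ∏ i, |g (k i)|) hg.hasSum ih hsum
      rw [pow_succ']
      refine (Equiv.hasSum_iff (Fin.consEquiv (fun _ : Fin (t + 1) => ℕ))).mp ?_
      have hfe : ((fun k : Fin (t + 1) → ℕ => ∏ i, |g (k i)|) ∘
            (Fin.consEquiv (fun _ : Fin (t + 1) => ℕ))) =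
          fun p : ℕ × (Fin t → ℕ) => |g p.1| * ∏ i, |g (p.2 i)| := by
        funext p
        show (∏ i : Fin (t + 1), |g ((Fin.cons p.1 p.2 : Fin (t+1) → ℕ) i)|) = _
        rw [Fin.prod_univ_succ]
        simp
      rw [hfe]
      exact hmul

private lemma hasSum_pi_prod (g : ℕ → ℝ) (hg : Summable fun n => |g n|) :
    ∀ t : ℕ, HasSum (fun k : Fin t → ℕ => ∏ i, g (k i)) ((∑' n, g n) ^ t) := by
  intro t
  induction t with
  | zero =>
      simp only [pow_zero, Finset.univ_eq_empty, Finset.prod_empty]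
      exact hasSum_single (f := fun _ : Fin 0 → ℕ => (1 : ℝ)) default
        (fun b hb => absurd (Subsingleton.elim b default) hb)
  | succ t ih =>
      have h1 : (0 : ℕ → ℝ) ≤ fun n => |g n| := fun n => abs_nonneg _
      have h2 : (0 : (Fin t → ℕ) → ℝ) ≤ fun k => ∏ i, |g (k i)| :=
        fun k => Finset.prod_nonneg fun i _ => abs_nonneg _
      have hsumabs := Summable.mul_of_nonneg (f := fun n => |g n|)
        (g := fun k : Fin t → ℕ => ∏ i, |g (k i)|) hg
        (hasSum_pi_prod_abs g hg t).summable h1 h2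
      have hpair : Summable (fun p : ℕ × (Fin t → ℕ) => g p.1 * ∏ i, g (p.2 i)) := by
        refine Summable.of_abs ?_
        refine hsumabs.congr fun p => ?_
        rw [abs_mul, prod_abs_eq]
      have hmul := HasSum.mul (f := g)
        (g := fun k : Fin t → ℕ => ∏ i, g (k i)) hg.of_abs.hasSum ih hpair
      rw [pow_succ']
      refine (Equiv.hasSum_iff (Fin.consEquiv (fun _ : Fin (t + 1) => ℕ))).mp ?_
      have hfe : ((fun k : Fin (t + 1) → ℕ => ∏ i, g (k i)) ∘
            (Fin.consEquiv (fun _ : Fin (t + 1) => ℕ))) =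
          fun p : ℕ × (Fin t → ℕ) => g p.1 * ∏ i, g (p.2 i) := by
        funext p
        show (∏ i : Fin (t + 1), g ((Fin.cons p.1 p.2 : Fin (t+1) → ℕ) i)) = _
        rw [Fin.prod_univ_succ]
        simp
      rw [hfe]
      exact hmul

private lemma inner_ell_eq (u v : ellTwo) : (inner ℝ u v : ℝ) = ∑' n, u n * v n := by
  rw [lp.inner_eq_tsum]; simp [RCLike.inner_apply, mul_comm]

private lemma key (a b : ℕ → ℝ) (hb : ∀ t, |b t| ≤ |a t|) (x y : ellTwo)
    (hx : Summable fun t : ℕ => |a t| * ‖x‖ ^ (2 * t))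
    (hy : Summable fun t : ℕ => |a t| * ‖y‖ ^ (2 * t)) :
    HasSum (fun p : Σ t : ℕ, Fin t → ℕ => b p.1 * ∏ i, (x (p.2 i) * y (p.2 i)))
      (∑' t : ℕ, b t * (inner ℝ x y : ℝ) ^ t) := by
  set g : ℕ → ℝ := fun n => x n * y n with hgdef
  have hgx : Summable fun n : ℕ => x n * x n := by
    have := lp.summable_inner (𝕜 := ℝ) x x
    simpa [RCLike.inner_apply, sq] using this
  have hgy : Summable fun n : ℕ => y n * y n := by
    have := lp.summable_inner (𝕜 := ℝ) y y
    simpa [RCLike.inner_apply, sq] using this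
  have hbound : ∀ n, |g n| ≤ (x n * x n + y n * y n) / 2 := by
    intro n
    rw [hgdef, abs_mul]
    nlinarith [sq_nonneg (|x n| - |y n|), sq_abs (x n), sq_abs (y n),
      abs_nonneg (x n), abs_nonneg (y n)]
  have hsum2 : Summable fun n => (x n * x n + y n * y n) / 2 := (hgx.add hgy).div_const 2
  have hgabs : Summable fun n => |g n| :=
    Summable.of_nonneg_of_le (fun n => abs_nonneg _) hbound hsum2
  have hTx : (∑' n, x n * x n) = ‖x‖ ^ 2 := by
    rw [← inner_ell_eq x x, real_inner_self_eq_norm_sq]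
  have hTy : (∑' n, y n * y n) = ‖y‖ ^ 2 := by
    rw [← inner_ell_eq y y, real_inner_self_eq_norm_sq]
  have hx' : Summable fun t : ℕ => |a t| * (‖x‖ ^ 2) ^ t := by
    simpa [pow_mul] using hx
  have hy' : Summable fun t : ℕ => |a t| * (‖y‖ ^ 2) ^ t := by
    simpa [pow_mul] using hy
  have hGle : (∑' n, |g n|) ≤ (‖x‖ ^ 2 + ‖y‖ ^ 2) / 2 := by
    calc (∑' n, |g n|) ≤ ∑' n, (x n * x n + y n * y n) / 2 :=
          Summable.tsum_le_tsum hbound hgabs hsum2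
      _ = ((∑' n, x n * x n) + ∑' n, y n * y n) / 2 := by
          rw [tsum_div_const, Summable.tsum_add hgx hgy]
      _ = (‖x‖ ^ 2 + ‖y‖ ^ 2) / 2 := by rw [hTx, hTy]
  have hGnonneg : 0 ≤ ∑' n, |g n| := tsum_nonneg fun n => abs_nonneg _
  have hM : ∀ t : ℕ, |b t| * (∑' n, |g n|) ^ t ≤
      |a t| * (‖x‖ ^ 2) ^ t + |a t| * (‖y‖ ^ 2) ^ t := by
    intro t
    have hGmax : (∑' n, |g n|) ≤ max (‖x‖ ^ 2) (‖y‖ ^ 2) := by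
      refine hGle.trans ?_
      rcases max_cases (‖x‖ ^ 2) (‖y‖ ^ 2) with ⟨h, h'⟩ | ⟨h, h'⟩ <;> rw [h] <;> linarith
    have h1 : (∑' n, |g n|) ^ t ≤ (max (‖x‖ ^ 2) (‖y‖ ^ 2)) ^ t :=
      pow_le_pow_left₀ hGnonneg hGmax t
    have h2 : (max (‖x‖ ^ 2) (‖y‖ ^ 2)) ^ t ≤ (‖x‖ ^ 2) ^ t + (‖y‖ ^ 2) ^ t := by
      rcases max_cases (‖x‖ ^ 2) (‖y‖ ^ 2) with ⟨h, _⟩ | ⟨h, _⟩ <;> rw [h]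
      · exact le_add_of_nonneg_right (by positivity)
      · exact le_add_of_nonneg_left (by positivity)
    calc |b t| * (∑' n, |g n|) ^ t ≤ |a t| * ((‖x‖ ^ 2) ^ t + (‖y‖ ^ 2) ^ t) :=
          mul_le_mul (hb t) (h1.trans h2) (by positivity) (abs_nonneg _)
      _ = |a t| * (‖x‖ ^ 2) ^ t + |a t| * (‖y‖ ^ 2) ^ t := by ring
  have hcoefsum : Summable fun t : ℕ => |b t| * (∑' n, |g n|) ^ t :=
    Summable.of_nonneg_of_le (fun t => by positivity) hM (hx'.add hy')
  have hfibers_abs : ∀ t : ℕ, HasSum (fun k : Fin t → ℕ => |b t| * ∏ i, |g (k i)|)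
      (|b t| * (∑' n, |g n|) ^ t) := fun t => (hasSum_pi_prod_abs g hgabs t).mul_left _
  have habs_sigma : Summable fun p : Σ t : ℕ, Fin t → ℕ => |b p.1 * ∏ i, g (p.2 i)| := by
    have habs_eq : (fun p : Σ t : ℕ, Fin t → ℕ => |b p.1 * ∏ i, g (p.2 i)|) =
        fun p : Σ t : ℕ, Fin t → ℕ => |b p.1| * ∏ i, |g (p.2 i)| := by
      funext p; rw [abs_mul, prod_abs_eq]
    rw [habs_eq]
    refine (summable_sigma_of_nonneg ?_).mpr ⟨fun t => (hfibers_abs t).summable, ?_⟩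
    · intro p
      exact mul_nonneg (abs_nonneg _) (Finset.prod_nonneg fun i _ => abs_nonneg _)
    · refine hcoefsum.congr fun t => ?_
      exact ((hfibers_abs t).tsum_eq).symm
  have hsig : Summable fun p : Σ t : ℕ, Fin t → ℕ => b p.1 * ∏ i, g (p.2 i) :=
    habs_sigma.of_abs
  have hinner_g : (∑' n, g n) = (inner ℝ x y : ℝ) := (inner_ell_eq x y).symm
  have hfibers : ∀ t : ℕ, HasSum (fun k : Fin t → ℕ => b t * ∏ i, g (k i))
      (b t * (inner ℝ x y : ℝ) ^ t) := by
    intro t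
    have := (hasSum_pi_prod g hgabs t).mul_left (b t)
    rwa [hinner_g] at this
  have hcoef : Summable fun t : ℕ => b t * (inner ℝ x y : ℝ) ^ t := by
    refine Summable.of_abs ?_
    refine Summable.of_nonneg_of_le (fun t => abs_nonneg _) (fun t => ?_) hcoefsum
    rw [abs_mul, abs_pow]
    refine mul_le_mul_of_nonneg_left (pow_le_pow_left₀ (abs_nonneg _) ?_ t) (abs_nonneg _)
    rw [← hinner_g]
    have hnorm : ‖∑' n, g n‖ ≤ ∑' n, ‖g n‖ :=
      norm_tsum_le_tsum_norm (by simpa [Real.norm_eq_abs] using hgabs)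
    simpa [Real.norm_eq_abs] using hnorm
  exact HasSum.sigma_of_hasSum hcoef.hasSum hfibers hsig

private lemma lp_coe_mk (F : (Σ t : ℕ, Fin t → ℕ) → ℝ) (h : Memℓp F 2)
    (p : Σ t : ℕ, Fin t → ℕ) :
    (⟨F, h⟩ : lp (fun _ : (Σ t : ℕ, Fin t → ℕ) => ℝ) 2) p = F p := rfl

/-- Let `σ : ℝ → ℝ` equal its Taylor series at `0` on all of `ℝ`,
`σ(u) = ∑_t a_t u^t`, and set `f(u) := ∑_t |a_t| u^t`. With
`B := {x ∈ ℓ² : ∑_t |a_t| ‖x‖^{2t} < ∞}`, there exist maps `φ, ψ : B → H` into the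
separable Hilbert space `H = ℓ²(⋃_t ℕ^t)` such that for all `x, x', w ∈ B`:
`⟨φ(x), φ(x')⟩ = f(⟨x,x'⟩)`, `⟨ψ(x), ψ(x')⟩ = f(⟨x,x'⟩)` and `⟨φ(x), ψ(w)⟩ = σ(⟨x,w⟩)`. -/
theorem stmt_9 (σ : ℝ → ℝ) (a : ℕ → ℝ)
    (hσ : ∀ u : ℝ, HasSum (fun t : ℕ => a t * u ^ t) (σ u))
    (f : ℝ → ℝ) (hf : f = fun u : ℝ => ∑' t : ℕ, |a t| * u ^ t)
    (B : Set ellTwo) (hB : B = {x : ellTwo | Summable fun t : ℕ => |a t| * ‖x‖ ^ (2 * t)}) :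
    ∃ φ ψ : B → featSpace,
      (∀ x x' : B, (inner ℝ (φ x) (φ x') : ℝ) = f ((inner ℝ (x : ellTwo) (x' : ellTwo) : ℝ))) ∧
      (∀ x x' : B, (inner ℝ (ψ x) (ψ x') : ℝ) = f ((inner ℝ (x : ellTwo) (x' : ellTwo) : ℝ))) ∧
      (∀ x w : B, (inner ℝ (φ x) (ψ w) : ℝ) = σ ((inner ℝ (x : ellTwo) (w : ellTwo) : ℝ))) := by
  set c : ℕ → ℝ := fun t => Real.sqrt |a t| with hc
  set s : ℕ → ℝ := fun t => a t / Real.sqrt |a t| with hs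
  have hcc : ∀ t, c t * c t = |a t| := fun t => Real.mul_self_sqrt (abs_nonneg _)
  have hcs : ∀ t, c t * s t = a t := by
    intro t
    rcases eq_or_ne (a t) 0 with h | h
    · simp [hc, hs, h]
    · have hne : Real.sqrt |a t| ≠ 0 := ne_of_gt (Real.sqrt_pos.mpr (abs_pos.mpr h))
      rw [hc, hs]
      show Real.sqrt |a t| * (a t / Real.sqrt |a t|) = a t
      rw [mul_comm, div_mul_cancel₀ _ hne]
  have hss : ∀ t, s t * s t = |a t| := by
    intro t
    rcases eq_or_ne (a t) 0 with h | h
    · simp [hs, h]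
    · have hne : Real.sqrt |a t| ≠ 0 := ne_of_gt (Real.sqrt_pos.mpr (abs_pos.mpr h))
      have hsq : Real.sqrt |a t| * Real.sqrt |a t| = |a t| :=
        Real.mul_self_sqrt (abs_nonneg _)
      rw [hs]
      rw [div_mul_div_comm, hsq, div_eq_iff (abs_ne_zero.mpr h)]
      nlinarith [sq_abs (a t)]
  have habs : ∀ t, |(|a t|)| ≤ |a t| := fun t => le_of_eq (abs_abs _)
  have haa : ∀ t, |a t| ≤ |a t| := fun t => le_rfl
  have hmemB : ∀ x : B,
      Summable fun t : ℕ => |a t| * ‖(x : ellTwo)‖ ^ (2 * t) := by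
    rintro ⟨v, hv⟩
    rw [hB] at hv
    exact hv
  have hmem : ∀ (d : ℕ → ℝ), (∀ t, d t * d t = |a t|) →
      ∀ x : B,
      Memℓp (fun p : Σ t : ℕ, Fin t → ℕ => d p.1 * ∏ i, (x : ellTwo) (p.2 i)) 2 := by
    intro d hd x
    refine memℓp_gen ?_
    have hsum := (key a (fun t => |a t|) habs (x : ellTwo) (x : ellTwo)
      (hmemB x) (hmemB x)).summable
    refine hsum.congr fun p => ?_
    have h2 : ((2 : ℝ≥0∞)).toReal = ((2 : ℕ) : ℝ) := by norm_num
    rw [h2, Real.rpow_natCast, Real.norm_eq_abs, sq_abs, Finset.prod_mul_distrib,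
      ← hd p.1]
    ring
  refine ⟨fun x => ⟨fun p => c p.1 * ∏ i, (x : ellTwo) (p.2 i), hmem c hcc x⟩,
    fun x => ⟨fun p => s p.1 * ∏ i, (x : ellTwo) (p.2 i), hmem s hss x⟩, ?_, ?_, ?_⟩
  · intro x x'
    have hkey := key a (fun t => |a t|) habs (x : ellTwo) (x' : ellTwo) (hmemB x) (hmemB x')
    rw [lp.inner_eq_tsum]
    refine Eq.trans (tsum_congr fun p => ?_) (hkey.tsum_eq.trans (congrFun hf _).symm)
    simp only [lp_coe_mk, RCLike.inner_apply, conj_trivial]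
    rw [Finset.prod_mul_distrib, ← hcc p.1]
    ring
  · intro x x'
    have hkey := key a (fun t => |a t|) habs (x : ellTwo) (x' : ellTwo) (hmemB x) (hmemB x')
    rw [lp.inner_eq_tsum]
    refine Eq.trans (tsum_congr fun p => ?_) (hkey.tsum_eq.trans (congrFun hf _).symm)
    simp only [lp_coe_mk, RCLike.inner_apply, conj_trivial]
    rw [Finset.prod_mul_distrib, ← hss p.1]
    ring
  · intro x w
    have hkey := key a a haa (x : ellTwo) (w : ellTwo) (hmemB x) (hmemB w)
    rw [lp.inner_eq_tsum, ← (hσ _).tsum_eq]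
    refine Eq.trans (tsum_congr fun p => ?_) hkey.tsum_eq
    simp only [lp_coe_mk, RCLike.inner_apply, conj_trivial]
    rw [Finset.prod_mul_distrib, ← hcs p.1]
    ring
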